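/- Abstract version: let s₁ ≤ s₂ ≤ ... ≤ s_d be real numbers with ∑_{j=1}^d s_j ≤ 0, and set S_k = ∑_{j=1}^k s_j. Then for each k = 1,...,d-1 one has ((k+1)/k)·S_k ≤ S_{k+1} ≤ ((d-k-1)/(d-k))·S_k. -/

import Mathlib

open BigOperators

/-- Abstract chain inequality: if s₀ ≤ s₁ ≤ … ≤ s_{d-1} with total sum ≤ 0 and
S_k = s₀ + … + s_{k-1}, then ((k+1)/k)·S_k ≤ S_{k+1} ≤ ((d-k-1)/(d-k))·S_k for
1 ≤ k ≤ d-1. -/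
theorem abstract_chain_inequality (d : ℕ) (s : ℕ → ℝ)
    (hmono : ∀ j, j + 1 < d → s j ≤ s (j + 1))
    (hsum : ∑ j ∈ Finset.range d, s j ≤ 0) :
    ∀ k : ℕ, 1 ≤ k → k < d →
      ((k : ℝ) + 1) / k * (∑ j ∈ Finset.range k, s j) ≤
          ∑ j ∈ Finset.range (k + 1), s j ∧
        (∑ j ∈ Finset.range (k + 1), s j) ≤
          ((d : ℝ) - k - 1) / ((d : ℝ) - k) * ∑ j ∈ Finset.range k, s j := by
  have hm : ∀ i j : ℕ, i ≤ j → j < d → s i ≤ s j := by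
    intro i j hij hjd
    induction j with
    | zero => simp_all
    | succ n ih =>
      rcases Nat.lt_or_ge i (n+1) with h | h
      · exact le_trans (ih (Nat.lt_succ_iff.mp h) (lt_trans (Nat.lt_succ_self n) hjd))
          (hmono n hjd)
      · have : i = n + 1 := le_antisymm hij h
        simp [this]
  intro k hk1 hkd
  set S := ∑ j ∈ Finset.range k, s j with hS
  have hSk : S ≤ (k : ℝ) * s k := by
    calc S ≤ ∑ _j ∈ Finset.range k, s k := by
            apply Finset.sum_le_sum
            intro j hj
            exact hm j k (le_of_lt (Finset.mem_range.mp hj)) hkd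
      _ = (k : ℝ) * s k := by simp [mul_comm]
  have hsucc : ∑ j ∈ Finset.range (k + 1), s j = S + s k := Finset.sum_range_succ s k
  have hkpos : (0 : ℝ) < k := by exact_mod_cast hk1
  constructor
  · rw [hsucc, div_mul_eq_mul_div, div_le_iff₀ hkpos]
    nlinarith
  · -- tail estimate
    have hsplit : ∑ j ∈ Finset.range d, s j
        = S + ∑ j ∈ Finset.Ico k d, s j := by
      rw [hS, Finset.range_eq_Ico, Finset.range_eq_Ico]
      exact (Finset.sum_Ico_consecutive s (Nat.zero_le k) (le_of_lt hkd)).symm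
    have htail : ((d - k : ℕ) : ℝ) * s k ≤ ∑ j ∈ Finset.Ico k d, s j := by
      calc ((d - k : ℕ) : ℝ) * s k = ∑ _j ∈ Finset.Ico k d, s k := by
            simp [Nat.card_Ico, mul_comm]
        _ ≤ ∑ j ∈ Finset.Ico k d, s j := by
            apply Finset.sum_le_sum
            intro j hj
            exact hm k j (Finset.mem_Ico.mp hj).1 (Finset.mem_Ico.mp hj).2
    have hcast : ((d - k : ℕ) : ℝ) = (d : ℝ) - k := by
      rw [Nat.cast_sub (le_of_lt hkd)]
    have hkey : S + ((d : ℝ) - k) * s k ≤ 0 := by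
      rw [← hcast]; nlinarith [hsplit ▸ hsum]
    have hc : (0 : ℝ) < (d : ℝ) - k := by
      have : (k : ℝ) < d := by exact_mod_cast hkd
      linarith
    rw [hsucc, div_mul_eq_mul_div, le_div_iff₀ hc]
    nlinarith
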